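/- For the half-line harmonic oscillator L(η) = -d²/dx² + (x+η)² on (-∞,0) with Dirichlet boundary condition at 0 (equivalently -d²/dx² + x² on (-∞,η) with Dirichlet condition at η), each Dirichlet eigenvalue λ_{D,n}(η) is strictly greater than 2n+1 for all real η. -/

import Mathlib

open MeasureTheory Set Filter Topology Real

/-- `u` is an L²-normalized eigenfunction of the harmonic oscillator `-d²/dx² + x²`
on the half-line `(-∞, η]` with eigenvalue `lam`. -/
def IsOscEigenfun (η lam : ℝ) (u : ℝ → ℝ) : Prop :=
  ContDiff ℝ 2 u ∧
  (∀ x : ℝ, x ≤ η → -(deriv (deriv u)) x + x ^ 2 * u x = lam * u x) ∧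
  Integrable (fun x => (u x) ^ 2) (volume.restrict (Iic η)) ∧
  ∫ x in Iic η, (u x) ^ 2 = 1

/-- `lam` is an eigenvalue of `-d²/dx² + x²` on `(-∞, η)` with Dirichlet condition at `η`. -/
def IsDirEV (η lam : ℝ) : Prop := ∃ u, IsOscEigenfun η lam u ∧ u η = 0

/-- `lam` is an eigenvalue of `-d²/dx² + x²` on `(-∞, η)` with Neumann condition at `η`. -/
def IsNeuEV (η lam : ℝ) : Prop := ∃ u, IsOscEigenfun η lam u ∧ deriv u η = 0

/-- `lam` enumerates, in strictly increasing order, all values satisfying `P`. -/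
def EnumeratesEV (P : ℝ → Prop) (lam : ℕ → ℝ) : Prop :=
  StrictMono lam ∧ (∀ n, P (lam n)) ∧ ∀ t, P t → ∃ n, lam n = t

namespace OscProof

open Polynomial

/-- `u` is `C²` and satisfies `u'' = (x² - lam) u` for all `x ≤ η`. -/
def SolOn (lam η : ℝ) (u : ℝ → ℝ) : Prop :=
  ContDiff ℝ 2 u ∧ ∀ x ≤ η, deriv (deriv u) x = (x ^ 2 - lam) * u x

/-- the gaussian wave packet attached to a polynomial -/
noncomputable def gp (P : Polynomial ℝ) : ℝ → ℝ := fun x => Real.exp (-(x^2)/2) * P.eval x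

/-- the effect of d/dx on a wave packet at the polynomial level -/
noncomputable def gpd (P : Polynomial ℝ) : Polynomial ℝ := derivative P - X * P

/-- the Wronskian of two functions -/
noncomputable def Wr (u v : ℝ → ℝ) : ℝ → ℝ := fun x => deriv u x * v x - u x * deriv v x

variable {lam mu η : ℝ} {u v : ℝ → ℝ}

lemma SolOn.diff (h : SolOn lam η u) : Differentiable ℝ u :=
  h.1.differentiable (by norm_num)

lemma SolOn.cont (h : SolOn lam η u) : Continuous u := h.diff.continuous

lemma SolOn.diff_deriv (h : SolOn lam η u) : Differentiable ℝ (deriv u) := by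
  have h2 : ContDiff ℝ (1 + 1) u := by
    have := h.1; norm_num at this ⊢; exact this
  rw [contDiff_succ_iff_deriv] at h2
  exact h2.2.2.differentiable (by norm_num)

lemma SolOn.cont_deriv (h : SolOn lam η u) : Continuous (deriv u) :=
  h.diff_deriv.continuous

lemma SolOn.cont_deriv2 (h : SolOn lam η u) : Continuous (deriv (deriv u)) := by
  have h2 : ContDiff ℝ (1 + 1) u := by
    have := h.1; norm_num at this ⊢; exact this
  rw [contDiff_succ_iff_deriv] at h2
  exact h2.2.2.continuous_deriv le_rfl

lemma SolOn.neg (h : SolOn lam η u) : SolOn lam η (fun x => -u x) := by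
  refine ⟨h.1.neg, fun x hx => ?_⟩
  have h1 : deriv (fun x => -u x) = fun x => -deriv u x := by
    ext y; exact deriv.neg
  rw [h1]
  have h2 : deriv (fun x => -deriv u x) x = -(deriv (deriv u) x) := deriv.neg
  rw [h2, h.2 x hx]; ring

lemma SolOn.sub_smul (h : SolOn lam η u) (h' : SolOn lam η v) (c : ℝ) :
    SolOn lam η (fun x => u x - c * v x) := by
  refine ⟨h.1.sub (contDiff_const.mul h'.1), fun x hx => ?_⟩
  have h1 : deriv (fun x => u x - c * v x) = fun x => deriv u x - c * deriv v x := by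
    ext y
    rw [deriv_fun_sub (h.diff y) ((h'.diff y).const_mul c), deriv_const_mul c (h'.diff y)]
  rw [h1]
  rw [deriv_fun_sub (h.diff_deriv x) ((h'.diff_deriv x).const_mul c),
    deriv_const_mul c (h'.diff_deriv x), h.2 x hx, h'.2 x hx]
  ring


/-- First-order vanishing at a point propagates to all of `Iic η`. -/
lemma SolOn.eq_zero (h : SolOn lam η u) {x₀ : ℝ} (hx₀ : x₀ ≤ η)
    (h0 : u x₀ = 0) (h0' : deriv u x₀ = 0) : ∀ x ≤ η, u x = 0 := by
  have hE : ∀ y, HasDerivAt (fun z => u z ^ 2 + deriv u z ^ 2)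
      (2 * u y * deriv u y + 2 * deriv u y * deriv (deriv u) y) y := by
    intro y
    have h1 := ((h.diff y).hasDerivAt).pow 2
    have h2 := ((h.diff_deriv y).hasDerivAt).pow 2
    refine (h1.add h2).congr_deriv ?_
    push_cast; ring
  set E : ℝ → ℝ := fun z => u z ^ 2 + deriv u z ^ 2 with hEdef
  have hE0 : E x₀ = 0 := by simp [hEdef, h0, h0']
  have hEnn : ∀ y, 0 ≤ E y := fun y => by positivity
  have hEcont : Continuous E :=
    ((h.diff.continuous.pow 2).add ((h.diff_deriv.continuous).pow 2))
  have hexpd : ∀ (c y : ℝ), HasDerivAt (fun z => Real.exp (c * z)) (c * Real.exp (c * y)) y := by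
    intro c y
    simpa [Function.comp_def, mul_comm] using
      ((Real.hasDerivAt_exp (c * y)).comp y ((hasDerivAt_id y).const_mul c))
  -- key estimate
  have key : ∀ a b : ℝ, a ≤ b → b ≤ η → ∀ y ∈ Icc a b,
      |2 * u y * deriv u y + 2 * deriv u y * deriv (deriv u) y|
        ≤ (1 + a ^ 2 + b ^ 2 + |lam|) * E y := by
    intro a b hab hbη y hy
    have hyb : y ≤ η := le_trans hy.2 hbη
    rw [h.2 y hyb]
    have hc : |1 + (y ^ 2 - lam)| ≤ 1 + a ^ 2 + b ^ 2 + |lam| := by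
      rw [abs_le]
      constructor <;>
        nlinarith [sq_nonneg y, abs_nonneg lam, le_abs_self lam, neg_abs_le lam,
          mul_nonneg (sub_nonneg.mpr hy.1) (sub_nonneg.mpr hy.2), sq_nonneg (y - a),
          sq_nonneg (y - b)]
    have hexp : 2 * u y * deriv u y + 2 * deriv u y * ((y ^ 2 - lam) * u y)
        = 2 * (u y * deriv u y) * (1 + (y ^ 2 - lam)) := by ring
    rw [hexp, abs_mul]
    have h3 : |2 * (u y * deriv u y)| ≤ E y := by
      simp only [hEdef]
      rw [abs_le]
      constructor <;> nlinarith [sq_nonneg (u y + deriv u y), sq_nonneg (u y - deriv u y)]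
    have hKnn : (0:ℝ) ≤ 1 + a ^ 2 + b ^ 2 + |lam| := by positivity
    calc |2 * (u y * deriv u y)| * |1 + (y ^ 2 - lam)|
        ≤ E y * (1 + a ^ 2 + b ^ 2 + |lam|) :=
          mul_le_mul h3 hc (abs_nonneg _) (hEnn y)
      _ = (1 + a ^ 2 + b ^ 2 + |lam|) * E y := by ring
  -- propagation
  intro x hx
  have hEx0 : E x = 0 := by
    rcases le_total x x₀ with hle | hle
    · -- leftward: F = E * exp (K y) is monotone on [x, x₀]
      set K : ℝ := 1 + x ^ 2 + x₀ ^ 2 + |lam| with hK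
      set F : ℝ → ℝ := fun y => E y * Real.exp (K * y) with hF
      have hFd : ∀ y, HasDerivAt F
          ((2 * u y * deriv u y + 2 * deriv u y * deriv (deriv u) y) * Real.exp (K * y)
            + E y * (K * Real.exp (K * y))) y := by
        intro y
        exact (hE y).mul (hexpd K y)
      have hFcont : Continuous F := by
        apply hEcont.mul
        exact Real.continuous_exp.comp (continuous_const.mul continuous_id)
      have hmono : MonotoneOn F (Icc x x₀) := by
        refine monotoneOn_of_deriv_nonneg (convex_Icc x x₀) hFcont.continuousOn
          (fun y _ => ((hFd y).differentiableAt).differentiableWithinAt) ?_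
        intro y hy
        rw [interior_Icc] at hy
        rw [(hFd y).deriv]
        have hb := key x x₀ hle hx₀ y (Ioo_subset_Icc_self hy)
        rw [← hK] at hb
        have hneg := neg_abs_le (2 * u y * deriv u y + 2 * deriv u y * deriv (deriv u) y)
        have h1 : -(K * E y) ≤ 2 * u y * deriv u y + 2 * deriv u y * deriv (deriv u) y := by
          linarith
        have hexp : 0 < Real.exp (K * y) := Real.exp_pos _
        nlinarith [mul_le_mul_of_nonneg_right h1 hexp.le]
      have hFx : F x ≤ F x₀ := hmono (left_mem_Icc.mpr hle) (right_mem_Icc.mpr hle) hle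
      have hFx₀ : F x₀ = 0 := by simp [hF, hE0]
      have : 0 ≤ F x := mul_nonneg (hEnn x) (Real.exp_pos _).le
      have hFx0 : F x = 0 := le_antisymm (hFx₀ ▸ hFx) this
      have hexp : 0 < Real.exp (K * x) := Real.exp_pos _
      have := mul_eq_zero.mp hFx0
      rcases this with h' | h'
      · exact h'
      · exact absurd h' (ne_of_gt hexp)
    · -- rightward: G = E * exp (-K y) is antitone on [x₀, x]
      set K : ℝ := 1 + x₀ ^ 2 + x ^ 2 + |lam| with hK
      set F : ℝ → ℝ := fun y => E y * Real.exp (-K * y) with hF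
      have hFd : ∀ y, HasDerivAt F
          ((2 * u y * deriv u y + 2 * deriv u y * deriv (deriv u) y) * Real.exp (-K * y)
            + E y * (-K * Real.exp (-K * y))) y := by
        intro y
        exact (hE y).mul (hexpd (-K) y)
      have hFcont : Continuous F := by
        apply hEcont.mul
        exact Real.continuous_exp.comp (continuous_const.mul continuous_id)
      have hmono : AntitoneOn F (Icc x₀ x) := by
        refine antitoneOn_of_deriv_nonpos (convex_Icc x₀ x) hFcont.continuousOn
          (fun y _ => ((hFd y).differentiableAt).differentiableWithinAt) ?_
        intro y hy
        rw [interior_Icc] at hy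
        rw [(hFd y).deriv]
        have hb := key x₀ x hle hx y (Ioo_subset_Icc_self hy)
        rw [← hK] at hb
        have hpos := le_abs_self (2 * u y * deriv u y + 2 * deriv u y * deriv (deriv u) y)
        have h1 : 2 * u y * deriv u y + 2 * deriv u y * deriv (deriv u) y ≤ K * E y := by
          linarith
        have hexp : 0 < Real.exp (-K * y) := Real.exp_pos _
        nlinarith [mul_le_mul_of_nonneg_right h1 hexp.le]
      have hFx : F x ≤ F x₀ := hmono (left_mem_Icc.mpr hle) (right_mem_Icc.mpr hle) hle
      have hFx₀ : F x₀ = 0 := by simp [hF, hE0]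
      have : 0 ≤ F x := mul_nonneg (hEnn x) (Real.exp_pos _).le
      have hFx0 : F x = 0 := le_antisymm (hFx₀ ▸ hFx) this
      have hexp : 0 < Real.exp (-K * x) := Real.exp_pos _
      rcases mul_eq_zero.mp hFx0 with h' | h'
      · exact h'
      · exact absurd h' (ne_of_gt hexp)
  have h1 : u x ^ 2 = 0 := by
    have := hEnn x
    have h2 : 0 ≤ u x ^ 2 := sq_nonneg _
    have h3 : 0 ≤ deriv u x ^ 2 := sq_nonneg _
    simp only [hEdef] at hEx0
    linarith
  exact pow_eq_zero_iff (by norm_num) |>.mp h1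

def Nontriv (η : ℝ) (u : ℝ → ℝ) : Prop := ∃ x ≤ η, u x ≠ 0

lemma Nontriv.neg (h : Nontriv η u) : Nontriv η (fun x => -u x) := by
  obtain ⟨x, hx, hux⟩ := h; exact ⟨x, hx, by simpa using hux⟩

lemma SolOn.deriv_ne_of_zero (h : SolOn lam η u) (hnt : Nontriv η u) {x : ℝ}
    (hx : x ≤ η) (hux : u x = 0) : deriv u x ≠ 0 := by
  intro hd
  obtain ⟨y, hy, huy⟩ := hnt
  exact huy (h.eq_zero hx hux hd y hy)

/-- zeros in `Iic η` are topologically isolated -/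
lemma SolOn.isolated (h : SolOn lam η u) (hnt : Nontriv η u) {x : ℝ}
    (hx : x ≤ η) (hux : u x = 0) : ∀ᶠ z in 𝓝[≠] x, u z ≠ 0 := by
  have hd : deriv u x ≠ 0 := h.deriv_ne_of_zero hnt hx hux
  have hslope : Tendsto (slope u x) (𝓝[≠] x) (𝓝 (deriv u x)) :=
    hasDerivAt_iff_tendsto_slope.mp (h.diff x).hasDerivAt
  have hne : ∀ᶠ z in 𝓝[≠] x, slope u x z ≠ 0 := hslope.eventually_ne hd
  filter_upwards [hne, self_mem_nhdsWithin] with z hz hz'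
  intro huz
  apply hz
  simp only [slope, hux, huz, vsub_eq_sub, sub_zero, zero_sub]
  simp [huz, hux]

/-- second derivative positive at an interior critical point rules out a local max -/
lemma not_isLocalMax_of_deriv2_pos (h : SolOn lam η u) {c : ℝ}
    (hd0 : deriv u c = 0) (hD : 0 < deriv (deriv u) c) : ¬ IsLocalMax u c := by
  intro hmax
  have hslope : Tendsto (slope (deriv u) c) (𝓝[≠] c) (𝓝 (deriv (deriv u) c)) :=
    hasDerivAt_iff_tendsto_slope.mp (h.diff_deriv c).hasDerivAt
  have hpos : ∀ᶠ z in 𝓝[≠] c, 0 < slope (deriv u) c z :=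
    hslope.eventually (eventually_gt_nhds hD)
  have hpos' : ∀ᶠ z in 𝓝[>] c, 0 < deriv u z := by
    have : 𝓝[>] c ≤ 𝓝[≠] c := nhdsWithin_mono c fun z hz => ne_of_gt hz
    filter_upwards [this hpos, self_mem_nhdsWithin] with z hz hz'
    have hzc : c < z := hz'
    have hsl := hz
    simp only [slope, vsub_eq_sub, hd0, sub_zero, smul_eq_mul] at hsl
    have h2 : 0 < z - c := by linarith
    have h3 : deriv u z = (z - c) * ((z - c)⁻¹ * deriv u z) := by field_simp
    rw [h3]
    exact mul_pos h2 hsl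
  obtain ⟨d, hd, hsub⟩ := mem_nhdsGT_iff_exists_Ioo_subset.mp hpos'
  have hmono : StrictMonoOn u (Icc c d) := by
    refine strictMonoOn_of_deriv_pos (convex_Icc c d) h.cont.continuousOn ?_
    intro z hz
    rw [interior_Icc] at hz
    exact hsub hz
  have hd' : c < d := hd
  set z := (c + d) / 2 with hz
  have hzc : c < z := by simp [hz]; linarith
  have hzd : z < d := by simp [hz]; linarith
  have hlt : u c < u z := hmono (left_mem_Icc.mpr hd'.le) ⟨hzc.le, hzd.le⟩ hzc
  -- local max: eventually u ≤ u c near c, in particular on 𝓝[>] c ∩ Ioo c d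
  have hev : ∀ᶠ w in 𝓝[>] c, u w ≤ u c := hmax.filter_mono nhdsWithin_le_nhds
  have hIoo : Ioo c d ∈ 𝓝[>] c := Ioo_mem_nhdsGT_of_mem ⟨le_refl c, hd'⟩
  obtain ⟨w, hw1, hw2⟩ := (hev.and (eventually_of_mem hIoo fun w hw => hw)).exists
  have : u c < u w := hmono (left_mem_Icc.mpr hd'.le) ⟨hw2.1.le, hw2.2.le⟩ hw2.1
  linarith

/-- on an interval where `lam < x²`, a solution vanishing at both ends vanishes identically -/
lemma SolOn.zero_on_Icc (h : SolOn lam η u) {a b : ℝ} (hab : a < b) (hb : b ≤ η)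
    (hq : ∀ y ∈ Icc a b, lam < y ^ 2) (ha0 : u a = 0) (hb0 : u b = 0) :
    ∀ y ∈ Icc a b, u y = 0 := by
  -- first: max of any such solution is 0
  have hmax0 : ∀ (w : ℝ → ℝ), SolOn lam η w → w a = 0 → w b = 0 →
      ∀ y ∈ Icc a b, w y ≤ 0 := by
    intro w hw ha' hb' y hy
    obtain ⟨c, hc, hcmax⟩ := isCompact_Icc.exists_isMaxOn (nonempty_Icc.mpr hab.le)
      hw.cont.continuousOn
    by_contra hpos
    push_neg at hpos
    have hwc : 0 < w c := lt_of_lt_of_le hpos (hcmax hy)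
    have hca : c ≠ a := fun h' => by rw [h', ha'] at hwc; exact lt_irrefl _ hwc
    have hcb : c ≠ b := fun h' => by rw [h', hb'] at hwc; exact lt_irrefl _ hwc
    have hcint : c ∈ Ioo a b := ⟨lt_of_le_of_ne hc.1 (Ne.symm hca), lt_of_le_of_ne hc.2 hcb⟩
    have hlocal : IsLocalMax w c := hcmax.isLocalMax (Icc_mem_nhds hcint.1 hcint.2)
    have hd0 : deriv w c = 0 := hlocal.deriv_eq_zero
    have hD : 0 < deriv (deriv w) c := by
      rw [hw.2 c (le_trans hc.2 hb)]
      exact mul_pos (by nlinarith [hq c hc]) hwc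
    exact not_isLocalMax_of_deriv2_pos hw hd0 hD hlocal
  intro y hy
  have h1 := hmax0 u h ha0 hb0 y hy
  have h2 := hmax0 (fun x => -u x) h.neg (by simp [ha0]) (by simp [hb0]) y hy
  simp at h2
  linarith

/-- the zero set of a nontrivial solution in `Iic η` is finite,
provided the solution is square-integrable (we only need: at most one zero far left). -/
lemma SolOn.finite_zeros (h : SolOn lam η u) (hnt : Nontriv η u) :
    {x | x ≤ η ∧ u x = 0}.Finite := by
  classical
  set A : ℝ := min η (-(Real.sqrt (|lam| + 1))) with hA
  -- ray part has at most one point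
  have hkey : ∀ p q : ℝ, p ∈ {x | x ≤ η ∧ u x = 0} ∩ Iic A →
      q ∈ {x | x ≤ η ∧ u x = 0} ∩ Iic A → p < q → False := by
    intro p q hp hq hlt
    have hqA : q ≤ A := hq.2
    have hqη : q ≤ η := hq.1.1
    have hsq : ∀ y ∈ Icc p q, lam < y ^ 2 := by
      intro y hy
      have hyA : y ≤ A := le_trans hy.2 hqA
      have h1 : y ≤ -(Real.sqrt (|lam| + 1)) := le_trans hyA (min_le_right _ _)
      have h2 : 0 ≤ Real.sqrt (|lam| + 1) := Real.sqrt_nonneg _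
      have h3 : Real.sqrt (|lam| + 1) ^ 2 = |lam| + 1 := Real.sq_sqrt (by positivity)
      nlinarith [le_abs_self lam]
    have hzero := h.zero_on_Icc hlt hqη hsq hp.1.2 hq.1.2
    -- u vanishes identically on a neighbourhood of the midpoint
    set c := (p + q) / 2 with hc
    have hcmem : c ∈ Ioo p q := ⟨by simp [hc]; linarith, by simp [hc]; linarith⟩
    have hev : u =ᶠ[𝓝 c] (fun _ => 0) := by
      filter_upwards [Ioo_mem_nhds hcmem.1 hcmem.2] with z hz
      exact hzero z (Ioo_subset_Icc_self hz)
    have hd : deriv u c = 0 := by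
      rw [hev.deriv_eq]; simp
    have huc : u c = 0 := hzero c (Ioo_subset_Icc_self hcmem)
    obtain ⟨y, hy, huy⟩ := hnt
    exact huy (h.eq_zero (le_trans (le_trans hcmem.2.le hqA) (min_le_left _ _)) huc hd y hy)
  have hray : ({x | x ≤ η ∧ u x = 0} ∩ Iic A).Subsingleton := by
    intro p hp q hq
    by_contra hpq
    rcases lt_or_gt_of_ne hpq with h' | h'
    · exact hkey p q hp hq h'
    · exact hkey q p hq hp h'
  -- compact part is finite
  have hcpt : ({x | x ≤ η ∧ u x = 0} ∩ Icc A η).Finite := by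
    by_contra hinf
    have hinf' : ({x | x ≤ η ∧ u x = 0} ∩ Icc A η).Infinite := hinf
    have hclosed : IsClosed ({x | x ≤ η ∧ u x = 0} ∩ Icc A η) := by
      have h1 : {x | x ≤ η ∧ u x = 0} = Iic η ∩ u ⁻¹' {0} := by
        ext z; simp [Set.mem_Iic, and_comm]
      rw [h1]
      exact ((isClosed_Iic.inter (isClosed_singleton.preimage h.cont)).inter isClosed_Icc)
    have hK : IsCompact ({x | x ≤ η ∧ u x = 0} ∩ Icc A η) :=
      isCompact_Icc.of_isClosed_subset hclosed inter_subset_right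
    obtain ⟨x, hxK, hacc⟩ := hinf'.exists_accPt_of_subset_isCompact hK subset_rfl
    have hiso := h.isolated hnt hxK.1.1 hxK.1.2
    have : {z | u z ≠ 0} ∩ ({x | x ≤ η ∧ u x = 0} ∩ Icc A η) ∈
        𝓝[≠] x ⊓ 𝓟 ({x | x ≤ η ∧ u x = 0} ∩ Icc A η) :=
      inter_mem (mem_inf_of_left hiso) (mem_inf_of_right (mem_principal_self _))
    obtain ⟨z, hz1, hz2⟩ := hacc.nonempty_of_mem this
    exact hz1 hz2.1.2
  have hsub : {x | x ≤ η ∧ u x = 0} ⊆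
      ({x | x ≤ η ∧ u x = 0} ∩ Iic A) ∪ ({x | x ≤ η ∧ u x = 0} ∩ Icc A η) := by
    intro z hz
    rcases le_total z A with h' | h'
    · exact Or.inl ⟨hz, h'⟩
    · exact Or.inr ⟨hz, h', hz.1⟩
  exact ((hray.finite).union hcpt).subset hsub

lemma not_sq_integrable (hint : Integrable (fun x => u x ^ 2) (volume.restrict (Iic η)))
    {ε x₁ : ℝ} (hε : 0 < ε) (hx₁ : x₁ ≤ η) (hbig : ∀ x ≤ x₁, ε ≤ u x ^ 2) : False := by
  have h1 := hint.measure_norm_ge_lt_top hε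
  have hsub : Iic x₁ ⊆ {x | ε ≤ ‖u x ^ 2‖} := fun x hx => by
    have hn : ‖u x ^ 2‖ = u x ^ 2 := by
      rw [Real.norm_eq_abs]; exact abs_of_nonneg (by positivity)
    simp only [Set.mem_setOf_eq, hn]
    exact hbig x hx
  have h2 : (volume.restrict (Iic η)) (Iic x₁) = ⊤ := by
    rw [Measure.restrict_apply measurableSet_Iic, Set.Iic_inter_Iic, min_eq_left hx₁]
    exact Real.volume_Iic
  have h3 : (⊤ : ENNReal) ≤ (volume.restrict (Iic η)) {x | ε ≤ ‖u x ^ 2‖} :=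
    h2 ▸ measure_mono hsub
  rw [top_le_iff] at h3
  rw [h3] at h1
  exact absurd h1 (by simp)

/-- positive near -∞ case of the decay lemma -/
lemma SolOn.decay_pos (h : SolOn lam η u)
    (hint : Integrable (fun x => u x ^ 2) (volume.restrict (Iic η)))
    {b₀ : ℝ} (hb₀ : b₀ ≤ η) (hq : ∀ x ≤ b₀, lam < x ^ 2) (hpos : ∀ x ≤ b₀, 0 < u x) :
    Tendsto u atBot (𝓝 0) ∧ Tendsto (deriv u) atBot (𝓝 0) := by
  have hd2pos : ∀ x ≤ b₀, 0 < deriv (deriv u) x := by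
    intro x hx
    rw [h.2 x (le_trans hx hb₀)]
    exact mul_pos (by nlinarith [hq x hx]) (hpos x hx)
  have hdmono : StrictMonoOn (deriv u) (Iic b₀) := by
    refine strictMonoOn_of_deriv_pos (convex_Iic b₀) h.cont_deriv.continuousOn ?_
    intro x hx
    rw [interior_Iic] at hx
    exact hd2pos x hx.le
  have hd_nonneg : ∀ x ≤ b₀, 0 ≤ deriv u x := by
    intro x₀ hx₀
    by_contra hneg
    push_neg at hneg
    set d : ℝ := -deriv u x₀ with hd
    have hdpos : 0 < d := by simp [hd]; linarith
    -- u x ≥ u x₀ + d * (x₀ - x) for x ≤ x₀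
    have hg : ∀ y : ℝ, HasDerivAt (fun x => u x - deriv u x₀ * x)
        (deriv u y - deriv u x₀) y := by
      intro y
      have h1 : HasDerivAt (fun x : ℝ => deriv u x₀ * x) (deriv u x₀) y := by
        simpa using (hasDerivAt_id y).const_mul (deriv u x₀)
      exact ((h.diff y).hasDerivAt).sub h1
    have hanti : AntitoneOn (fun x => u x - deriv u x₀ * x) (Iic x₀) := by
      refine antitoneOn_of_deriv_nonpos (convex_Iic x₀)
        (h.cont.sub (continuous_const.mul continuous_id)).continuousOn
        (fun y _ => (hg y).differentiableAt.differentiableWithinAt) ?_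
      intro y hy
      rw [interior_Iic] at hy
      rw [(hg y).deriv]
      have := hdmono (mem_Iic.mpr (le_trans hy.le hx₀)) (mem_Iic.mpr hx₀) hy
      linarith
    have hlb : ∀ x ≤ x₀, u x₀ + d * (x₀ - x) ≤ u x := by
      intro x hx
      have := hanti (mem_Iic.mpr hx) (mem_Iic.mpr le_rfl) hx
      simp only at this
      nlinarith
    set x₁ : ℝ := x₀ - 1 / d with hx₁
    have hx₁le : x₁ ≤ x₀ := by
      simp [hx₁]
      positivity
    refine not_sq_integrable hint one_pos (le_trans (le_trans hx₁le hx₀) hb₀) ?_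
    intro x hx
    have h1 : u x₀ + d * (x₀ - x) ≤ u x := hlb x (le_trans hx hx₁le)
    have h2 : 1 ≤ d * (x₀ - x) := by
      have : 1 / d ≤ x₀ - x := by
        have := hx
        simp only [hx₁] at this
        linarith
      calc (1:ℝ) = d * (1 / d) := by field_simp
        _ ≤ d * (x₀ - x) := by
          exact mul_le_mul_of_nonneg_left this hdpos.le
    have h3 : 0 < u x₀ := hpos x₀ hx₀
    nlinarith
  have humono : MonotoneOn u (Iic b₀) := by
    refine monotoneOn_of_deriv_nonneg (convex_Iic b₀) h.cont.continuousOn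
      (fun y _ => (h.diff y).differentiableWithinAt) ?_
    intro y hy
    rw [interior_Iic] at hy
    exact hd_nonneg y hy.le
  constructor
  · rw [NormedAddCommGroup.tendsto_nhds_zero]
    intro ε hε
    have hex : ∃ x₁ ≤ b₀, u x₁ < ε := by
      by_contra hno
      push_neg at hno
      refine not_sq_integrable hint (mul_pos hε hε) hb₀ ?_
      intro x hx
      have := hno x hx
      nlinarith
    obtain ⟨x₁, hx₁b, hx₁ε⟩ := hex
    have : Iic x₁ ∈ (atBot : Filter ℝ) := Iic_mem_atBot x₁
    filter_upwards [this] with x hx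
    have h1 : u x ≤ u x₁ := humono (mem_Iic.mpr (le_trans hx hx₁b)) (mem_Iic.mpr hx₁b) hx
    have h2 : 0 < u x := hpos x (le_trans hx hx₁b)
    rw [Real.norm_eq_abs, abs_of_pos h2]
    linarith
  · rw [NormedAddCommGroup.tendsto_nhds_zero]
    intro ε hε
    have hex : ∃ x₁ ≤ b₀, deriv u x₁ < ε := by
      by_contra hno
      push_neg at hno
      -- then u x ≤ u b₀ - ε (b₀ - x) for all x ≤ b₀, eventually negative
      have hg : ∀ y : ℝ, HasDerivAt (fun x => u x - ε * x) (deriv u y - ε) y := by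
        intro y
        have h1 : HasDerivAt (fun x : ℝ => ε * x) ε y := by
          simpa using (hasDerivAt_id y).const_mul ε
        exact ((h.diff y).hasDerivAt).sub h1
      have hmono2 : MonotoneOn (fun x => u x - ε * x) (Iic b₀) := by
        refine monotoneOn_of_deriv_nonneg (convex_Iic b₀)
          (h.cont.sub (continuous_const.mul continuous_id)).continuousOn
          (fun y _ => (hg y).differentiableAt.differentiableWithinAt) ?_
        intro y hy
        rw [interior_Iic] at hy
        rw [(hg y).deriv]
        have := hno y hy.le
        linarith
      set x₂ : ℝ := b₀ - u b₀ / ε - 1 with hx₂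
      have hx₂b : x₂ ≤ b₀ := by
        have h1 : 0 < u b₀ := hpos b₀ le_rfl
        have h2 : 0 < u b₀ / ε := div_pos h1 hε
        simp [hx₂]; linarith
      have := hmono2 (mem_Iic.mpr hx₂b) (mem_Iic.mpr le_rfl) hx₂b
      simp only at this
      have h1 : 0 < u x₂ := hpos x₂ hx₂b
      have h2 : u x₂ ≤ u b₀ - ε * (b₀ - x₂) := by linarith
      have h3 : ε * (b₀ - x₂) = u b₀ + ε := by
        simp only [hx₂]
        field_simp
        ring
      linarith
    obtain ⟨x₁, hx₁b, hx₁ε⟩ := hex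
    filter_upwards [Iic_mem_atBot x₁] with x hx
    have h1 : deriv u x ≤ deriv u x₁ :=
      (hdmono.monotoneOn) (mem_Iic.mpr (le_trans hx hx₁b)) (mem_Iic.mpr hx₁b) hx
    have h2 : 0 ≤ deriv u x := hd_nonneg x (le_trans hx hx₁b)
    rw [Real.norm_eq_abs, abs_of_nonneg h2]
    linarith

/-- a nontrivial square-integrable solution has eventual constant sign and controlled data -/
lemma SolOn.sign_ray (h : SolOn lam η u) (hnt : Nontriv η u) :
    ∃ b₀ ≤ η, (∀ x ≤ b₀, lam < x ^ 2) ∧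
      ((∀ x ≤ b₀, 0 < u x) ∨ (∀ x ≤ b₀, u x < 0)) := by
  obtain ⟨m, hm⟩ := (h.finite_zeros hnt).bddBelow
  set b₀ : ℝ := min (min η (m - 1)) (-(Real.sqrt (|lam| + 1))) with hb₀
  have hb₀η : b₀ ≤ η := le_trans (min_le_left _ _) (min_le_left _ _)
  have hq : ∀ x ≤ b₀, lam < x ^ 2 := by
    intro x hx
    have h1 : x ≤ -(Real.sqrt (|lam| + 1)) := le_trans hx (min_le_right _ _)
    have h2 : 0 ≤ Real.sqrt (|lam| + 1) := Real.sqrt_nonneg _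
    have h3 : Real.sqrt (|lam| + 1) ^ 2 = |lam| + 1 := Real.sq_sqrt (by positivity)
    nlinarith [le_abs_self lam]
  have hne : ∀ x ≤ b₀, u x ≠ 0 := by
    intro x hx hux
    have hxZ : x ∈ {x | x ≤ η ∧ u x = 0} := ⟨le_trans hx hb₀η, hux⟩
    have := hm hxZ
    have h2 : x ≤ m - 1 := le_trans hx (le_trans (min_le_left _ _) (min_le_right _ _))
    linarith
  refine ⟨b₀, hb₀η, hq, ?_⟩
  rcases lt_or_gt_of_ne (hne b₀ le_rfl) with hneg | hpos
  · right
    intro x hx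
    rcases lt_or_gt_of_ne (hne x hx) with h' | h'
    · exact h'
    exfalso
    obtain ⟨c, hc, hc0⟩ := intermediate_value_Icc' hx h.cont.continuousOn
      (show (0:ℝ) ∈ Icc (u b₀) (u x) from ⟨hneg.le, h'.le⟩)
    exact hne c (hc.2) hc0
  · left
    intro x hx
    rcases lt_or_gt_of_ne (hne x hx) with h' | h'
    swap
    · exact h'
    exfalso
    obtain ⟨c, hc, hc0⟩ := intermediate_value_Icc hx h.cont.continuousOn
      (show (0:ℝ) ∈ Icc (u x) (u b₀) from ⟨h'.le, hpos.le⟩)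
    exact hne c (hc.2) hc0

lemma SolOn.decay (h : SolOn lam η u) (hnt : Nontriv η u)
    (hint : Integrable (fun x => u x ^ 2) (volume.restrict (Iic η))) :
    Tendsto u atBot (𝓝 0) ∧ Tendsto (deriv u) atBot (𝓝 0) := by
  obtain ⟨b₀, hb₀η, hq, hsign | hsign⟩ := h.sign_ray hnt
  · exact h.decay_pos hint hb₀η hq hsign
  · have hint' : Integrable (fun x => (-u x) ^ 2) (volume.restrict (Iic η)) := by
      simpa using hint
    have := (h.neg).decay_pos hint' hb₀η hq (fun x hx => by simpa using hsign x hx)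
    obtain ⟨h1, h2⟩ := this
    constructor
    · have := h1.neg
      simpa using this
    · have hderiv : deriv (fun x => -u x) = fun x => -deriv u x := by
        ext y; exact deriv.neg
      rw [hderiv] at h2
      have := h2.neg
      simpa using this

lemma hasDerivAt_Wr (hu : SolOn lam η u) (hv : SolOn mu η v) {x : ℝ} (hx : x ≤ η) :
    HasDerivAt (Wr u v) ((mu - lam) * (u x * v x)) x := by
  have h1 := (((hu.diff_deriv x).hasDerivAt.mul ((hv.diff x).hasDerivAt)).sub
    (((hu.diff x).hasDerivAt).mul ((hv.diff_deriv x).hasDerivAt)))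
  refine h1.congr_deriv ?_
  rw [hu.2 x hx, hv.2 x hx]; ring

lemma Wr_sub (hu : SolOn lam η u) (hv : SolOn mu η v) {a b : ℝ} (hab : a ≤ b) (hb : b ≤ η) :
    Wr u v b - Wr u v a = ∫ y in a..b, (mu - lam) * (u y * v y) := by
  rw [intervalIntegral.integral_eq_sub_of_hasDerivAt]
  · intro x hx
    rw [uIcc_of_le hab] at hx
    exact hasDerivAt_Wr hu hv (le_trans hx.2 hb)
  · exact (Continuous.intervalIntegrable (by
      exact continuous_const.mul (hu.cont.mul hv.cont)) a b)

lemma deriv_nonneg_left {a b : ℝ} (hu : Differentiable ℝ u) (hab : a < b) (hua : u a = 0)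
    (hpos : ∀ x ∈ Ioo a b, 0 < u x) : 0 ≤ deriv u a := by
  have hslope : Tendsto (slope u a) (𝓝[>] a) (𝓝 (deriv u a)) :=
    (hasDerivAt_iff_tendsto_slope.mp (hu a).hasDerivAt).mono_left
      (nhdsWithin_mono a fun z hz => ne_of_gt hz)
  refine ge_of_tendsto hslope ?_
  filter_upwards [Ioo_mem_nhdsGT_of_mem ⟨le_refl a, hab⟩] with z hz
  have h1 : 0 < u z := hpos z hz
  have h2 : 0 < z - a := by linarith [hz.1]
  simp only [slope, vsub_eq_sub, hua, sub_zero, smul_eq_mul]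
  positivity

lemma deriv_nonpos_right {a b : ℝ} (hu : Differentiable ℝ u) (hab : a < b) (hub : u b = 0)
    (hpos : ∀ x ∈ Ioo a b, 0 < u x) : deriv u b ≤ 0 := by
  have hslope : Tendsto (slope u b) (𝓝[<] b) (𝓝 (deriv u b)) :=
    (hasDerivAt_iff_tendsto_slope.mp (hu b).hasDerivAt).mono_left
      (nhdsWithin_mono b fun z hz => ne_of_lt hz)
  refine le_of_tendsto hslope ?_
  filter_upwards [Ioo_mem_nhdsLT_of_mem ⟨hab, le_refl b⟩] with z hz
  have h1 : 0 < u z := hpos z hz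
  have h2 : z - b < 0 := by linarith [hz.2]
  simp only [slope, vsub_eq_sub, hub, sub_zero, smul_eq_mul]
  have : (z - b)⁻¹ < 0 := inv_lt_zero.mpr h2
  nlinarith

lemma cont_nonneg_left {a b : ℝ} (hv : Continuous v) (hab : a < b)
    (hpos : ∀ x ∈ Ioo a b, 0 < v x) : 0 ≤ v a := by
  have h1 : Tendsto v (𝓝[>] a) (𝓝 (v a)) := (hv.tendsto a).mono_left nhdsWithin_le_nhds
  refine ge_of_tendsto h1 ?_
  filter_upwards [Ioo_mem_nhdsGT_of_mem ⟨le_refl a, hab⟩] with z hz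
  exact (hpos z hz).le

lemma cont_nonneg_right {a b : ℝ} (hv : Continuous v) (hab : a < b)
    (hpos : ∀ x ∈ Ioo a b, 0 < v x) : 0 ≤ v b := by
  have h1 : Tendsto v (𝓝[<] b) (𝓝 (v b)) := (hv.tendsto b).mono_left nhdsWithin_le_nhds
  refine ge_of_tendsto h1 ?_
  filter_upwards [Ioo_mem_nhdsLT_of_mem ⟨hab, le_refl b⟩] with z hz
  exact (hpos z hz).le

lemma sturm_int_core (hu : SolOn lam η u) (hv : SolOn mu η v) (hlt : lam < mu)
    {a b : ℝ} (hab : a < b) (hb : b ≤ η) (hua : u a = 0) (hub : u b = 0)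
    (hupos : ∀ x ∈ Ioo a b, 0 < u x) (hvpos : ∀ x ∈ Ioo a b, 0 < v x) : False := by
  have hI : 0 < ∫ y in a..b, (mu - lam) * (u y * v y) := by
    refine intervalIntegral.intervalIntegral_pos_of_pos_on
      ((continuous_const.mul (hu.cont.mul hv.cont)).intervalIntegrable a b) ?_ hab
    intro x hx
    have := mul_pos (hupos x hx) (hvpos x hx)
    nlinarith
  have hWsub := Wr_sub hu hv hab.le hb
  have hWa : 0 ≤ Wr u v a := by
    have h1 : 0 ≤ deriv u a := deriv_nonneg_left hu.diff hab hua hupos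
    have h2 : 0 ≤ v a := cont_nonneg_left hv.cont hab hvpos
    simp only [Wr, hua]
    nlinarith
  have hWb : Wr u v b ≤ 0 := by
    have h1 : deriv u b ≤ 0 := deriv_nonpos_right hu.diff hab hub hupos
    have h2 : 0 ≤ v b := cont_nonneg_right hv.cont hab hvpos
    simp only [Wr, hub]
    nlinarith
  linarith

lemma pos_or_neg_on {s : Set ℝ} (hv : Continuous v) (hs : s.OrdConnected)
    (hne : ∀ x ∈ s, v x ≠ 0) : (∀ x ∈ s, 0 < v x) ∨ (∀ x ∈ s, v x < 0) := by
  by_contra hcon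
  push_neg at hcon
  obtain ⟨⟨x, hx, hxle⟩, ⟨y, hy, hyle⟩⟩ := hcon
  have hxneg : v x < 0 := lt_of_le_of_ne hxle (hne x hx)
  have hypos : 0 < v y := lt_of_le_of_ne (not_lt.mp ?_) (Ne.symm (hne y hy))
  swap
  · exact fun h => absurd hyle (not_le.mpr h)
  have h0 : (0:ℝ) ∈ uIcc (v x) (v y) := by
    rw [Set.mem_uIcc]
    left; exact ⟨hxneg.le, hypos.le⟩
  obtain ⟨c, hc, hc0⟩ := intermediate_value_uIcc (hv.continuousOn (s := uIcc x y)) h0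
  exact hne c (hs.uIcc_subset hx hy hc) hc0

lemma sturm_int (hu : SolOn lam η u) (hv : SolOn mu η v) (hlt : lam < mu)
    {a b : ℝ} (hab : a < b) (hb : b ≤ η) (hua : u a = 0) (hub : u b = 0)
    (hune : ∀ x ∈ Ioo a b, u x ≠ 0) : ∃ c ∈ Ioo a b, v c = 0 := by
  by_contra hno
  push_neg at hno
  have hvne : ∀ x ∈ Ioo a b, v x ≠ 0 := fun x hx => hno x hx
  rcases pos_or_neg_on hu.cont Set.ordConnected_Ioo hune with hU | hU <;>
    rcases pos_or_neg_on hv.cont Set.ordConnected_Ioo hvne with hV | hV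
  · exact sturm_int_core hu hv hlt hab hb hua hub hU hV
  · exact sturm_int_core hu hv.neg hlt hab hb hua hub hU
      (fun x hx => by simpa using hV x hx)
  · exact sturm_int_core hu.neg hv hlt hab hb (by simp [hua]) (by simp [hub])
      (fun x hx => by simpa using hU x hx) hV
  · exact sturm_int_core hu.neg hv.neg hlt hab hb (by simp [hua]) (by simp [hub])
      (fun x hx => by simpa using hU x hx) (fun x hx => by simpa using hV x hx)

lemma sturm_left_core (hu : SolOn lam η u) (hv : SolOn mu η v) (hlt : lam < mu)
    {c : ℝ} (hc : c ≤ η) (huc : u c = 0)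
    (hupos : ∀ x ∈ Iio c, 0 < u x) (hvpos : ∀ x ∈ Iio c, 0 < v x)
    (hu0 : Tendsto u atBot (𝓝 0)) (hu0' : Tendsto (deriv u) atBot (𝓝 0))
    (hv0 : Tendsto v atBot (𝓝 0)) (hv0' : Tendsto (deriv v) atBot (𝓝 0)) : False := by
  have hW0 : Tendsto (Wr u v) atBot (𝓝 0) := by
    have := (hu0'.mul hv0).sub (hu0.mul hv0')
    simp at this; exact this
  have hIoosub : ∀ m : ℝ, m < c → Ioo m c ⊆ Iio c := fun m _ x hx => hx.2
  have hIccsub : ∀ x, x ∈ Icc (c-1) c → x ≤ η := fun x hx => le_trans hx.2 hc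
  -- positive contribution on (c-1, c)
  have hI : 0 < ∫ y in (c-1)..c, (mu - lam) * (u y * v y) := by
    refine intervalIntegral.intervalIntegral_pos_of_pos_on
      ((continuous_const.mul (hu.cont.mul hv.cont)).intervalIntegrable _ _) ?_ (by linarith)
    intro x hx
    have h1 := hupos x hx.2
    have h2 := hvpos x hx.2
    exact mul_pos (by linarith) (mul_pos h1 h2)
  -- W is bounded below along atBot by its value at c-1 minus nothing
  have hWmono : ∀ m ≤ c - 1, Wr u v m ≤ Wr u v (c-1) := by
    intro m hm
    have hsub := Wr_sub hu hv hm (by linarith)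
    have hnn : 0 ≤ ∫ y in m..(c-1), (mu - lam) * (u y * v y) := by
      refine intervalIntegral.integral_nonneg hm ?_
      intro x hx
      have hxc : x < c := by
        rcases hx with ⟨_, h2⟩; linarith
      have h1 := hupos x hxc
      have h2 := hvpos x hxc
      exact (mul_pos (by linarith : (0:ℝ) < mu - lam) (mul_pos h1 h2)).le
    linarith
  have hWc1 : 0 ≤ Wr u v (c-1) := by
    refine le_of_tendsto hW0 ?_
    filter_upwards [Iic_mem_atBot (c-1)] with m hm
    exact hWmono m hm
  have hWc : 0 < Wr u v c := by
    have hsub := Wr_sub hu hv (show c - 1 ≤ c by linarith) hc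
    linarith
  have hWcle : Wr u v c ≤ 0 := by
    have h1 : deriv u c ≤ 0 := deriv_nonpos_right hu.diff (show c - 1 < c by linarith) huc
      (fun x hx => hupos x hx.2)
    have h2 : 0 ≤ v c := cont_nonneg_right hv.cont (show c - 1 < c by linarith)
      (fun x hx => hvpos x hx.2)
    simp only [Wr, huc]
    nlinarith
  linarith

lemma sturm_left (hu : SolOn lam η u) (hv : SolOn mu η v) (hlt : lam < mu)
    {c : ℝ} (hc : c ≤ η) (huc : u c = 0) (hune : ∀ x ∈ Iio c, u x ≠ 0)
    (hvne : ∀ x ∈ Iio c, v x ≠ 0)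
    (hu0 : Tendsto u atBot (𝓝 0)) (hu0' : Tendsto (deriv u) atBot (𝓝 0))
    (hv0 : Tendsto v atBot (𝓝 0)) (hv0' : Tendsto (deriv v) atBot (𝓝 0)) : False := by
  have hnegd : ∀ w : ℝ → ℝ, Differentiable ℝ w →
      deriv (fun x => -w x) = fun x => -deriv w x := by
    intro w hw; ext y; exact deriv.neg
  rcases pos_or_neg_on hu.cont Set.ordConnected_Iio hune with hU | hU <;>
    rcases pos_or_neg_on hv.cont Set.ordConnected_Iio hvne with hV | hV
  · exact sturm_left_core hu hv hlt hc huc hU hV hu0 hu0' hv0 hv0'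
  · refine sturm_left_core hu hv.neg hlt hc huc hU
      (fun x hx => by simpa using hV x hx) hu0 hu0' (by simpa using hv0.neg) ?_
    rw [hnegd v hv.diff]
    simpa using hv0'.neg
  · refine sturm_left_core hu.neg hv hlt hc (by simp [huc])
      (fun x hx => by simpa using hU x hx) hV (by simpa using hu0.neg) ?_ hv0 hv0'
    rw [hnegd u hu.diff]
    simpa using hu0'.neg
  · refine sturm_left_core hu.neg hv.neg hlt hc (by simp [huc])
      (fun x hx => by simpa using hU x hx) (fun x hx => by simpa using hV x hx)
      (by simpa using hu0.neg) ?_ (by simpa using hv0.neg) ?_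
    · rw [hnegd u hu.diff]; simpa using hu0'.neg
    · rw [hnegd v hv.diff]; simpa using hv0'.neg

/-- physicists' Hermite polynomials -/
noncomputable def ph : ℕ → Polynomial ℝ
  | 0 => 1
  | n + 1 => 2 * (X * ph n) - derivative (ph n)

lemma ph_succ (n : ℕ) : ph (n + 1) = 2 * (X * ph n) - derivative (ph n) := rfl

lemma derivative_two : derivative (2 : Polynomial ℝ) = 0 := by
  have := derivative_natCast (R := ℝ) (n := 2)
  simpa using this

lemma ph_deriv (n : ℕ) :
    derivative (ph (n + 1)) = (2 * ((n : Polynomial ℝ) + 1)) * ph n := by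
  induction n with
  | zero => simp [ph]
  | succ n ih =>
    have hconst : derivative (2 * ((n : Polynomial ℝ) + 1)) = 0 := by
      rw [derivative_mul, derivative_two]
      simp [derivative_natCast]
    have ih' : derivative (derivative (ph (n + 1)))
        = (2 * ((n : Polynomial ℝ) + 1)) * derivative (ph n) := by
      rw [ih, derivative_mul, hconst, zero_mul, zero_add]
    rw [ph_succ (n + 1), derivative_sub, ih', derivative_mul, derivative_two,
      derivative_mul, derivative_X, ih, ph_succ n]
    push_cast
    ring

lemma ph_ode (n : ℕ) : derivative (derivative (ph n)) =
    2 * (X * derivative (ph n)) - (2 * (n : Polynomial ℝ)) * ph n := by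
  have h1 : derivative (ph n) = 2 * (X * ph n) - ph (n + 1) := by
    rw [ph_succ]; ring
  calc derivative (derivative (ph n))
      = derivative (2 * (X * ph n) - ph (n + 1)) := by rw [← h1]
    _ = 2 * (ph n + X * derivative (ph n)) - (2 * ((n : Polynomial ℝ) + 1)) * ph n := by
        rw [derivative_sub, derivative_mul, derivative_two, derivative_mul, derivative_X,
          ph_deriv n]
        ring
    _ = 2 * (X * derivative (ph n)) - (2 * (n : Polynomial ℝ)) * ph n := by ring

lemma ph_ne_zero_natDegree (n : ℕ) : ph n ≠ 0 ∧ (ph n).natDegree = n := by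
  induction n with
  | zero => simp [ph]
  | succ n ih =>
    obtain ⟨hne, hdeg⟩ := ih
    have h2 : (2 : Polynomial ℝ) ≠ 0 := by norm_num
    have hX : (X : Polynomial ℝ) ≠ 0 := X_ne_zero
    have h20 : (2 : Polynomial ℝ).natDegree = 0 := natDegree_ofNat _
    have hq : (2 * (X * ph n)).natDegree = n + 1 := by
      rw [natDegree_mul h2 (mul_ne_zero hX hne), natDegree_mul hX hne, natDegree_X, hdeg, h20]
      omega
    have hd : (derivative (ph n)).natDegree < n + 1 := by
      have := natDegree_derivative_le (ph n)
      omega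
    have hdeg' : (ph (n+1)).natDegree = n + 1 := by
      rw [ph_succ, natDegree_sub_eq_left_of_natDegree_lt (by rw [hq]; exact hd), hq]
    refine ⟨?_, hdeg'⟩
    intro h0
    rw [h0] at hdeg'
    simp at hdeg'

lemma contDiff_eval (p : Polynomial ℝ) : ContDiff ℝ 2 fun x : ℝ => p.eval x := by
  induction p using Polynomial.induction_on' with
  | add p q hp hq => simpa [Polynomial.eval_add] using hp.add hq
  | monomial n a =>
    simpa [Polynomial.eval_monomial] using (contDiff_const.mul (contDiff_id.pow n))

lemma contDiff_gauss : ContDiff ℝ 2 fun x : ℝ => Real.exp (-(x^2)/2) :=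
  Real.contDiff_exp.comp (((contDiff_id.pow 2).neg).div_const 2)

lemma contDiff_gp (P : Polynomial ℝ) : ContDiff ℝ 2 (gp P) :=
  contDiff_gauss.mul (contDiff_eval P)

lemma hasDerivAt_gauss (x : ℝ) :
    HasDerivAt (fun x : ℝ => Real.exp (-(x^2)/2)) (-x * Real.exp (-(x^2)/2)) x := by
  have h1 : HasDerivAt (fun x : ℝ => -(x^2)/2) (-x) x := by
    have h := ((hasDerivAt_pow 2 x).neg).div_const 2
    refine h.congr_deriv ?_
    push_cast
    ring
  have := (Real.hasDerivAt_exp (-(x^2)/2)).comp x h1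
  simpa [Function.comp_def, mul_comm] using this

lemma gp_hasDerivAt (P : Polynomial ℝ) (x : ℝ) : HasDerivAt (gp P) (gp (gpd P) x) x := by
  have h := (hasDerivAt_gauss x).mul (P.hasDerivAt x)
  have hval : gp (gpd P) x = -x * Real.exp (-(x^2)/2) * P.eval x
      + Real.exp (-(x^2)/2) * (derivative P).eval x := by
    simp only [gp, gpd, eval_sub, eval_mul, eval_X]
    ring
  rw [hval]
  exact h

lemma deriv_gp (P : Polynomial ℝ) : deriv (gp P) = gp (gpd P) :=
  funext fun x => (gp_hasDerivAt P x).deriv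

/-- the Hermite wave functions solve the oscillator equation with `lam = 2n+1` -/
lemma gp_ph_solOn (n : ℕ) (η : ℝ) : SolOn (2 * n + 1) η (gp (ph n)) := by
  refine ⟨contDiff_gp _, fun x _ => ?_⟩
  rw [deriv_gp, deriv_gp]
  have hode : (derivative (derivative (ph n))).eval x
      = 2 * (x * (derivative (ph n)).eval x) - 2 * n * (ph n).eval x := by
    rw [ph_ode n]
    simp [eval_mul, eval_sub, eval_X]
  simp only [gp, gpd, derivative_sub, derivative_mul, derivative_X, one_mul,
    eval_sub, eval_mul, eval_add, eval_X]
  rw [hode]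
  ring

lemma gp_tendsto_atBot (P : Polynomial ℝ) : Tendsto (gp P) atBot (𝓝 0) := by
  set Q : Polynomial ℝ := P.comp (-X) with hQ
  have hcomp : ∀ t : ℝ, Q.eval t = P.eval (-t) := by
    intro t
    simp [hQ, eval_comp]
  have h1 : Tendsto (fun t : ℝ => Q.eval t / Real.exp t) atTop (𝓝 0) :=
    Q.tendsto_div_exp_atTop
  have h2 : Tendsto (fun t : ℝ => Real.exp (-(t^2)/2) * Q.eval t) atTop (𝓝 0) := by
    refine squeeze_zero_norm' ?_ (by simpa using h1.norm)
    filter_upwards [eventually_ge_atTop (2:ℝ)] with t ht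
    have hexp : Real.exp (-(t^2)/2) ≤ Real.exp (-t) := by
      apply Real.exp_le_exp.mpr
      nlinarith
    have hno : ‖Real.exp (-(t^2)/2) * Q.eval t‖
        = Real.exp (-(t^2)/2) * |Q.eval t| := by
      rw [Real.norm_eq_abs, abs_mul, abs_of_pos (Real.exp_pos _)]
    have hR : |Q.eval t| / Real.exp t = |Q.eval t| * Real.exp (-t) := by
      rw [Real.exp_neg]; ring
    rw [hno, hR, mul_comm]
    exact mul_le_mul_of_nonneg_left hexp (abs_nonneg _)
  have h3 := h2.comp tendsto_neg_atBot_atTop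
  refine h3.congr ?_
  intro x
  simp only [Function.comp_apply, hcomp, neg_neg]
  have : (-x)^2 = x^2 := by ring
  rw [this]
  rfl

/-- counting roots of a polynomial -/
lemma card_le_of_roots (P : Polynomial ℝ) (hP : P ≠ 0) (T : Finset ℝ)
    (hT : ∀ t ∈ T, P.eval t = 0) : T.card ≤ P.natDegree := by
  have hsub : T ⊆ P.roots.toFinset := by
    intro t ht
    rw [Multiset.mem_toFinset, mem_roots hP]
    exact hT t ht
  calc T.card ≤ P.roots.toFinset.card := Finset.card_le_card hsub
    _ ≤ Multiset.card P.roots := Multiset.toFinset_card_le _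
    _ ≤ P.natDegree := P.card_roots'

lemma gp_eq_zero_iff (P : Polynomial ℝ) (x : ℝ) : gp P x = 0 ↔ P.eval x = 0 := by
  simp [gp, Real.exp_ne_zero]

lemma gp_nontriv (P : Polynomial ℝ) (hP : P ≠ 0) (η : ℝ) : Nontriv η (gp P) := by
  have hfin : {x : ℝ | P.IsRoot x}.Finite := P.finite_setOf_isRoot hP
  obtain ⟨x, hx⟩ := ((Set.Iio_infinite η).diff hfin).nonempty
  refine ⟨x, le_of_lt hx.1, ?_⟩
  rw [Ne, gp_eq_zero_iff]
  exact hx.2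

/-- the key inductive step: zeros of a lower eigenfunction interlace with
those of any solution with a larger eigenvalue which decays at `-∞`. -/
lemma step_exists (hu : SolOn lam η u) (hnt : Nontriv η u)
    (hint : Integrable (fun x => u x ^ 2) (volume.restrict (Iic η)))
    (hv : SolOn mu η v) (hlt : lam < mu)
    (hv0 : Tendsto v atBot (𝓝 0)) (hv0' : Tendsto (deriv v) atBot (𝓝 0)) :
    ∃ T : Finset ℝ, ((hu.finite_zeros hnt).toFinset).card ≤ T.card ∧
      ∀ t ∈ T, t < η ∧ v t = 0 := by
  classical
  set S := (hu.finite_zeros hnt).toFinset with hS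
  have hmemS : ∀ z, z ∈ S ↔ z ≤ η ∧ u z = 0 := by
    intro z
    rw [hS, Set.Finite.mem_toFinset]
    rfl
  have hchoice : ∀ z ∈ S, ∃ t, t < z ∧ v t = 0 ∧ ∀ z' ∈ S, z' < z → z' < t := by
    intro z hz
    obtain ⟨hzη, hz0⟩ := (hmemS z).mp hz
    by_cases hbelow : ∃ z' ∈ S, z' < z
    · set P := S.filter (· < z) with hP
      have hPne : P.Nonempty := by
        obtain ⟨z', hz', hlt'⟩ := hbelow
        exact ⟨z', by simp [hP, hz', hlt']⟩
      set a := P.max' hPne with ha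
      have haP : a ∈ P := P.max'_mem hPne
      have haS : a ∈ S := (Finset.mem_filter.mp haP).1
      have haz : a < z := by
        have := (Finset.mem_filter.mp haP).2
        simpa using this
      have hmax : ∀ z' ∈ S, z' < z → z' ≤ a := by
        intro z' hz' hlt'
        exact P.le_max' z' (by simp [hP, hz', hlt'])
      have hnz : ∀ x ∈ Ioo a z, u x ≠ 0 := by
        intro x hx hx0
        have hxS : x ∈ S := (hmemS x).mpr ⟨le_trans hx.2.le hzη, hx0⟩
        exact absurd (hmax x hxS hx.2) (not_le.mpr hx.1)
      obtain ⟨c, hc, hc0⟩ := sturm_int hu hv hlt haz hzη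
        ((hmemS a).mp haS).2 hz0 hnz
      exact ⟨c, hc.2, hc0, fun z' hz' hlt' => lt_of_le_of_lt (hmax z' hz' hlt') hc.1⟩
    · push_neg at hbelow
      have hnzu : ∀ x ∈ Iio z, u x ≠ 0 := by
        intro x hx hx0
        have hxS : x ∈ S := (hmemS x).mpr ⟨le_trans (le_of_lt hx) hzη, hx0⟩
        exact absurd hx (not_lt.mpr (hbelow x hxS))
      obtain ⟨hu0, hu0'⟩ := hu.decay hnt hint
      have hker : ∃ t, t < z ∧ v t = 0 := by
        by_contra hno
        push_neg at hno
        have hvnz : ∀ x ∈ Iio z, v x ≠ 0 := fun x hx => hno x hx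
        exact (sturm_left hu hv hlt hzη hz0 hnzu hvnz hu0 hu0' hv0 hv0').elim
      obtain ⟨t, ht1, ht2⟩ := hker
      exact ⟨t, ht1, ht2, fun z' hz' hlt' => absurd hlt' (not_lt.mpr (hbelow z' hz'))⟩
  choose! f hf1 hf2 hf3 using hchoice
  refine ⟨S.image f, ?_, ?_⟩
  · rw [Finset.card_image_of_injOn]
    intro z1 hz1 z2 hz2 heq
    by_contra hne
    rcases lt_or_gt_of_ne hne with hlt' | hlt'
    · have h1 : f z1 < z1 := hf1 z1 hz1
      have h2 : z1 < f z2 := hf3 z2 hz2 z1 hz1 hlt'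
      rw [heq] at h1
      linarith
    · have h1 : f z2 < z2 := hf1 z2 hz2
      have h2 : z2 < f z1 := hf3 z1 hz1 z2 hz2 hlt'
      rw [heq] at h2
      linarith
  · intro t ht
    obtain ⟨z, hz, rfl⟩ := Finset.mem_image.mp ht
    have hzη := ((hmemS z).mp hz).1
    exact ⟨lt_of_lt_of_le (hf1 z hz) hzη, hf2 z hz⟩

/-- proportionality in the equal-eigenvalue case -/
lemma proportional (hu : SolOn lam η u) (hnt : Nontriv η u)
    (hu0 : Tendsto u atBot (𝓝 0)) (hu0' : Tendsto (deriv u) atBot (𝓝 0))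
    (hv : SolOn lam η v)
    (hv0 : Tendsto v atBot (𝓝 0)) (hv0' : Tendsto (deriv v) atBot (𝓝 0))
    {x₀ : ℝ} (hx₀ : x₀ ≤ η) (hvx₀ : v x₀ ≠ 0) :
    ∃ c : ℝ, ∀ x ≤ η, u x = c * v x := by
  have hW0 : Tendsto (Wr u v) atBot (𝓝 0) := by
    have := (hu0'.mul hv0).sub (hu0.mul hv0')
    simp at this; exact this
  have hWconst : ∀ x ≤ η, ∀ m ≤ x, Wr u v x = Wr u v m := by
    intro x hx m hm
    have h1 := Wr_sub (mu := lam) hu hv hm hx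
    simp only [sub_self, zero_mul, intervalIntegral.integral_zero] at h1
    linarith
  have hWzero : ∀ x ≤ η, Wr u v x = 0 := by
    intro x hx
    have hconst : Tendsto (fun _ : ℝ => Wr u v x) atBot (𝓝 0) := by
      refine hW0.congr' ?_
      filter_upwards [Iic_mem_atBot x] with m hm
      exact (hWconst x hx m hm).symm
    exact tendsto_const_nhds_iff.mp hconst
  set c := u x₀ / v x₀ with hc
  have hg : SolOn lam η (fun x => u x - c * v x) := hu.sub_smul hv c
  have hg0 : u x₀ - c * v x₀ = 0 := by rw [hc, div_mul_cancel₀ _ hvx₀, sub_self]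
  have hgd : deriv (fun x => u x - c * v x) x₀ = 0 := by
    have hd : deriv (fun x => u x - c * v x) x₀ = deriv u x₀ - c * deriv v x₀ := by
      rw [deriv_fun_sub (hu.diff x₀) (((hv.diff x₀)).const_mul c),
        deriv_const_mul c (hv.diff x₀)]
    rw [hd]
    have hW := hWzero x₀ hx₀
    simp only [Wr] at hW
    rw [hc]
    field_simp
    linarith
  have hall := hg.eq_zero hx₀ hg0 hgd
  exact ⟨c, fun x hx => by have := hall x hx; linarith⟩

lemma eig_solOn (h : IsOscEigenfun η lam u) : SolOn lam η u := by
  refine ⟨h.1, fun x hx => ?_⟩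
  have h2 := h.2.1 x hx
  linarith [h2]

lemma eig_nontriv (h : IsOscEigenfun η lam u) : Nontriv η u := by
  by_contra hno
  have hno' : ∀ x ≤ η, u x = 0 := by
    intro x hx
    by_contra h'
    exact hno ⟨x, hx, h'⟩
  have hzero : ∀ x ∈ Iic η, (fun x => u x ^ 2) x = (fun _ => (0:ℝ)) x := by
    intro x hx
    simp [hno' x hx]
  have h1 : ∫ x in Iic η, (u x) ^ 2 = 0 := by
    rw [setIntegral_congr_fun measurableSet_Iic hzero]
    simp
  rw [h.2.2.2] at h1
  norm_num at h1

/-- strictly larger Dirichlet eigenvalue means strictly more zeros -/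
lemma card_grow (hu : IsOscEigenfun η lam u) (hv : IsOscEigenfun η mu v)
    (hvη : v η = 0) (hlt : lam < mu) :
    {x | x ≤ η ∧ u x = 0}.ncard + 1 ≤ {x | x ≤ η ∧ v x = 0}.ncard := by
  classical
  have hufin := (eig_solOn hu).finite_zeros (eig_nontriv hu)
  have hvfin := (eig_solOn hv).finite_zeros (eig_nontriv hv)
  obtain ⟨hv0, hv0'⟩ := (eig_solOn hv).decay (eig_nontriv hv) hv.2.2.1
  obtain ⟨T, hcard, hT⟩ := step_exists (eig_solOn hu) (eig_nontriv hu) hu.2.2.1 (eig_solOn hv) hlt hv0 hv0'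
  have hη : η ∉ T := fun h => lt_irrefl η (hT η h).1
  have hsub : insert η T ⊆ hvfin.toFinset := by
    intro t ht
    rw [Set.Finite.mem_toFinset]
    rcases Finset.mem_insert.mp ht with rfl | ht'
    · exact ⟨le_rfl, hvη⟩
    · exact ⟨(hT t ht').1.le, (hT t ht').2⟩
  rw [Set.ncard_eq_toFinset_card _ hufin, Set.ncard_eq_toFinset_card _ hvfin]
  calc hufin.toFinset.card + 1 ≤ T.card + 1 := by omega
    _ = (insert η T).card := (Finset.card_insert_of_notMem hη).symm
    _ ≤ _ := Finset.card_le_card hsub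

lemma lemmaA (lamD : ℕ → ℝ → ℝ)
    (hD : ∀ η : ℝ, EnumeratesEV (IsDirEV η) (fun n => lamD n η)) (η : ℝ) :
    ∀ k : ℕ, ∀ u : ℝ → ℝ, IsOscEigenfun η (lamD k η) u → u η = 0 →
      k + 1 ≤ {x | x ≤ η ∧ u x = 0}.ncard := by
  intro k
  induction k with
  | zero =>
    intro u hu huη
    have hfin := (eig_solOn hu).finite_zeros (eig_nontriv hu)
    have hne : {x | x ≤ η ∧ u x = 0}.Nonempty := ⟨η, le_rfl, huη⟩
    have := (Set.ncard_pos hfin).mpr hne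
    omega
  | succ k ih =>
    intro u hu huη
    obtain ⟨w, hw, hwη⟩ := (hD η).2.1 k
    have h1 := ih w hw hwη
    have hlt : lamD k η < lamD (k + 1) η := (hD η).1 (Nat.lt_succ_self k)
    have h2 := card_grow hw hu huη hlt
    omega

theorem main (lamD : ℕ → ℝ → ℝ)
    (hD : ∀ η : ℝ, EnumeratesEV (IsDirEV η) (fun n => lamD n η)) :
    ∀ (n : ℕ) (η : ℝ), (2 * n + 1 : ℝ) < lamD n η := by
  intro n η
  by_contra hle
  push_neg at hle
  obtain ⟨u, hu, huη⟩ := (hD η).2.1 n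
  have hcard : n + 1 ≤ {x | x ≤ η ∧ u x = 0}.ncard := lemmaA lamD hD η n u hu huη
  have husol := (eig_solOn hu)
  have hunt := (eig_nontriv hu)
  have hfin := husol.finite_zeros hunt
  have hn1 : n + 1 ≤ hfin.toFinset.card := by
    rw [← Set.ncard_eq_toFinset_card _ hfin]
    exact hcard
  have hdeg := ph_ne_zero_natDegree n
  rcases lt_or_eq_of_le hle with hlt | heq
  · -- strict case : Sturm comparison with the n-th Hermite function
    obtain ⟨T, hTcard, hT⟩ := step_exists husol hunt hu.2.2.1 (gp_ph_solOn n η) hlt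
      (gp_tendsto_atBot _) (by rw [deriv_gp]; exact gp_tendsto_atBot _)
    have hTn : T.card ≤ n := by
      have := card_le_of_roots (ph n) hdeg.1 T
        (fun t ht => (gp_eq_zero_iff _ t).mp (hT t ht).2)
      rw [hdeg.2] at this
      exact this
    omega
  · -- equality case : the eigenfunction is proportional to the Hermite function
    have hvsol : SolOn (lamD n η) η (gp (ph n)) := heq ▸ gp_ph_solOn n η
    obtain ⟨x₀, hx₀, hvx₀⟩ := gp_nontriv (ph n) hdeg.1 η
    obtain ⟨hu0, hu0'⟩ := husol.decay hunt hu.2.2.1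
    obtain ⟨c, hc⟩ := proportional husol hunt hu0 hu0' hvsol (gp_tendsto_atBot _)
      (by rw [deriv_gp]; exact gp_tendsto_atBot _) hx₀ hvx₀
    have hcne : c ≠ 0 := by
      rintro rfl
      obtain ⟨y, hy, huy⟩ := hunt
      exact huy (by simpa using hc y hy)
    have hroots : ∀ z ∈ hfin.toFinset, (ph n).eval z = 0 := by
      intro z hz
      rw [Set.Finite.mem_toFinset] at hz
      have h1 := hc z hz.1
      rw [hz.2] at h1
      have h2 : gp (ph n) z = 0 := by
        rcases mul_eq_zero.mp h1.symm with h' | h'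
        · exact absurd h' hcne
        · exact h'
      exact (gp_eq_zero_iff _ z).mp h2
    have := card_le_of_roots (ph n) hdeg.1 hfin.toFinset hroots
    rw [hdeg.2] at this
    omega


end OscProof

/-- each Dirichlet eigenvalue `λ_{D,n}(η)` is strictly greater than `2n+1`. -/
theorem dirichlet_eigenvalue_gt_landau
    (lamD : ℕ → ℝ → ℝ)
    (hD : ∀ η : ℝ, EnumeratesEV (IsDirEV η) (fun n => lamD n η)) :
    ∀ (n : ℕ) (η : ℝ), (2 * n + 1 : ℝ) < lamD n η :=
  OscProof.main lamD hD
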